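/- The full-batch gradient descent update of node v's DistMult embedding, GD(φ,T)[v] = φ[v] + α Σ_{(s,r,o)∈T} ∂ log P(o|s,r)/∂φ[v], can be written in message-passing form as φ[v] + α·z[v] − β·n[v], where z[v] = Σ_{(r,w)∈N⁺[v]} g(r)⊙φ[w] + Σ_{(r,s)∈N⁻[v]} (1 − P(v|s,r)) g(r)⊙φ[s], n[v] = (1/|T|) Σ_{(v,r,·)∈T} Σ_{u∈E} P(u|v,r) g(r)⊙φ[u] + (1/|T|) Σ_{(s,r,o)∈T, s≠v, o≠v} P(v|s,r) g(r)⊙φ[s], and β = α|T|. -/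

import Mathlib

open Finset Real

/-- Elementwise (Hadamard) product of two vectors in `ℝ^K`. -/
noncomputable def hadamard {K : ℕ} (a b : EuclideanSpace ℝ (Fin K)) :
    EuclideanSpace ℝ (Fin K) := WithLp.toLp 2 (fun i => a i * b i)

/-- DistMult score of candidate object `u` for the triplet `t = (s,r,o)`, as a
function of the vector `x` substituted for `φ[v]`: if the subject is `v`, `x`
occupies the subject slot; otherwise `x` occupies the candidate-object slot
whenever the candidate is `v`. -/
noncomputable def dmSlotScore {E R : Type*} [Fintype E] [DecidableEq E] {K : ℕ}
    (φ : E → EuclideanSpace ℝ (Fin K)) (g : R → EuclideanSpace ℝ (Fin K))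
    (v : E) (t : E × R × E) (x : EuclideanSpace ℝ (Fin K)) (u : E) : ℝ :=
  if t.1 = v then ∑ i, x i * φ u i * g t.2.1 i
  else ∑ i, φ t.1 i * (if u = v then x i else φ u i) * g t.2.1 i

/-- `log P(o|s,r)` for the triplet `t = (s,r,o)`, softmax over all candidate
objects, as a function of the vector `x` substituted for `φ[v]`. -/
noncomputable def dmLogLik {E R : Type*} [Fintype E] [DecidableEq E] {K : ℕ}
    (φ : E → EuclideanSpace ℝ (Fin K)) (g : R → EuclideanSpace ℝ (Fin K))
    (v : E) (t : E × R × E) (x : EuclideanSpace ℝ (Fin K)) : ℝ :=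
  Real.log (Real.exp (dmSlotScore φ g v t x t.2.2) /
    ∑ u : E, Real.exp (dmSlotScore φ g v t x u))

/-- The softmax probability `P(u|s,r)` for the triplet `t = (s,r,o)`, evaluated
at the current embeddings `φ`. -/
noncomputable def dmProb {E R : Type*} [Fintype E] [DecidableEq E] {K : ℕ}
    (φ : E → EuclideanSpace ℝ (Fin K)) (g : R → EuclideanSpace ℝ (Fin K))
    (v : E) (t : E × R × E) (u : E) : ℝ :=
  Real.exp (dmSlotScore φ g v t (φ v) u) /
    ∑ u' : E, Real.exp (dmSlotScore φ g v t (φ v) u')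


/-- the full-batch gradient descent update of node `v`'s DistMult
embedding can be written in message-passing form `φ[v] + α z[v] − β n[v]`,
where `z[v]` aggregates messages from the 1-hop neighbourhood of `v`,
`n[v]` is the global normaliser, and `β = α |T|`. -/
theorem distmult_gd_message_passing_form
    {E R : Type*} [Fintype E] [DecidableEq E] {K : ℕ}
    (φ : E → EuclideanSpace ℝ (Fin K)) (g : R → EuclideanSpace ℝ (Fin K))
    (v : E) (T : Finset (E × R × E)) (α β : ℝ) (hα : 0 < α)
    (hβ : β = α * T.card) (hT : T.Nonempty)
    (hself : ∀ t ∈ T, t.1 ≠ t.2.2) :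
    φ v + α • gradient (fun x => ∑ t ∈ T, dmLogLik φ g v t x) (φ v)
    = φ v
      + α • (∑ t ∈ T.filter (fun t => t.1 = v), hadamard (g t.2.1) (φ t.2.2)
          + ∑ t ∈ T.filter (fun t => t.2.2 = v),
              (1 - dmProb φ g v t v) • hadamard (g t.2.1) (φ t.1))
      - β • ((1 / (T.card : ℝ)) •
            ∑ t ∈ T.filter (fun t => t.1 = v),
              ∑ u : E, dmProb φ g v t u • hadamard (g t.2.1) (φ u)
          + (1 / (T.card : ℝ)) •
            ∑ t ∈ T.filter (fun t => t.1 ≠ v ∧ t.2.2 ≠ v),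
              dmProb φ g v t v • hadamard (g t.2.1) (φ t.1)) := by
  classical
  obtain ⟨t0, ht0⟩ := hT
  haveI : Nonempty E := ⟨t0.1⟩
  -- linear coefficient of the affine map x ↦ dmSlotScore φ g v t x u
  set c : (E × R × E) → E → EuclideanSpace ℝ (Fin K) := fun t u =>
    if t.1 = v then hadamard (g t.2.1) (φ u)
    else if u = v then hadamard (g t.2.1) (φ t.1) else 0 with hc
  have hscore : ∀ t u x, dmSlotScore φ g v t x u
      = (inner ℝ (c t u) x : ℝ) + dmSlotScore φ g v t 0 u := by
    intro t u x
    by_cases h1 : t.1 = v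
    · simp only [dmSlotScore, if_pos h1, hc, PiLp.inner_apply, RCLike.inner_apply,
        conj_trivial, hadamard]
      have : ∀ i, (0 : EuclideanSpace ℝ (Fin K)) i * φ u i * g t.2.1 i = 0 := by
        intro i; simp
      rw [Finset.sum_congr rfl (fun i _ => this i), Finset.sum_const_zero, add_zero]
      exact Finset.sum_congr rfl (fun i _ => by ring)
    · by_cases h2 : u = v
      · simp only [dmSlotScore, if_neg h1, if_pos h2, hc, PiLp.inner_apply,
          RCLike.inner_apply, conj_trivial, hadamard]
        have : ∀ i, φ t.1 i * (0 : EuclideanSpace ℝ (Fin K)) i * g t.2.1 i = 0 := by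
          intro i; simp
        rw [Finset.sum_congr rfl (fun i _ => this i), Finset.sum_const_zero, add_zero]
        exact Finset.sum_congr rfl (fun i _ => by ring)
      · simp only [dmSlotScore, if_neg h1, if_neg h2, hc, PiLp.inner_apply,
          RCLike.inner_apply, conj_trivial]
        simp
  have hS : ∀ t (x : EuclideanSpace ℝ (Fin K)),
      (0:ℝ) < ∑ u : E, Real.exp (dmSlotScore φ g v t x u) :=
    fun t x => Finset.sum_pos (fun u _ => Real.exp_pos _) Finset.univ_nonempty
  set D : (E × R × E) → EuclideanSpace ℝ (Fin K) := fun t =>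
    c t t.2.2 - ∑ u : E, dmProb φ g v t u • c t u with hD
  have hgrad : ∀ t, HasGradientAt (dmLogLik φ g v t) (D t) (φ v) := by
    intro t
    rw [hasGradientAt_iff_hasFDerivAt]
    have hLL : dmLogLik φ g v t = fun x =>
        dmSlotScore φ g v t x t.2.2
          - Real.log (∑ u : E, Real.exp (dmSlotScore φ g v t x u)) := by
      funext x
      rw [dmLogLik, Real.log_div (Real.exp_ne_zero _) (ne_of_gt (hS t x)), Real.log_exp]
    rw [hLL]
    have hsc : ∀ u, HasFDerivAt (fun x => dmSlotScore φ g v t x u)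
        (innerSL ℝ (c t u)) (φ v) := by
      intro u
      have he : (fun x => dmSlotScore φ g v t x u)
          = fun x => (inner ℝ (c t u) x : ℝ) + dmSlotScore φ g v t 0 u := by
        funext x; exact hscore t u x
      rw [he]
      exact ((innerSL ℝ (c t u)).hasFDerivAt).add_const _
    have hSd : HasFDerivAt (fun x => ∑ u : E, Real.exp (dmSlotScore φ g v t x u))
        (∑ u : E, Real.exp (dmSlotScore φ g v t (φ v) u) • innerSL ℝ (c t u)) (φ v) :=
      HasFDerivAt.fun_sum (fun u _ => (hsc u).exp)
    have hlog := hSd.log (ne_of_gt (hS t (φ v)))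
    have hmain := (hsc t.2.2).sub hlog
    refine hmain.congr_fderiv ?_
    ext y
    simp only [InnerProductSpace.toDual_apply_apply, hD, inner_sub_left, sum_inner,
      inner_smul_left, conj_trivial, ContinuousLinearMap.coe_sub', Pi.sub_apply,
      innerSL_apply_apply, ContinuousLinearMap.coe_smul', Pi.smul_apply,
      ContinuousLinearMap.coe_sum', Finset.sum_apply, smul_eq_mul]
    rw [Finset.mul_sum]
    congr 1
    refine Finset.sum_congr rfl (fun u _ => ?_)
    rw [dmProb]
    rw [div_eq_inv_mul]; ring
  have hgradsum : HasGradientAt (fun x => ∑ t ∈ T, dmLogLik φ g v t x)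
      (∑ t ∈ T, D t) (φ v) := by
    rw [hasGradientAt_iff_hasFDerivAt]
    have h := HasFDerivAt.fun_sum (fun t (_ : t ∈ T) => (hgrad t).hasFDerivAt)
    refine h.congr_fderiv ?_
    exact (map_sum (InnerProductSpace.toDual ℝ (EuclideanSpace ℝ (Fin K))).toLinearEquiv.toLinearMap _ _).symm
  rw [hgradsum.gradient]
  -- now pure algebra
  have hn : (T.card : ℝ) ≠ 0 :=
    Nat.cast_ne_zero.mpr (Finset.card_pos.mpr ⟨t0, ht0⟩).ne'
  -- β • (1/|T|) • X = α • X
  have hβX : ∀ X : EuclideanSpace ℝ (Fin K), β • (1 / (T.card : ℝ)) • X = α • X := by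
    intro X
    rw [smul_smul, hβ]
    congr 1
    field_simp
  -- decompose T into the three parts
  have hsplit1 := Finset.sum_filter_add_sum_filter_not T (fun t => t.1 = v) D
  have hfilter2 : (T.filter (fun t => ¬ t.1 = v)).filter (fun t => t.2.2 = v)
      = T.filter (fun t => t.2.2 = v) := by
    rw [Finset.filter_filter]
    refine Finset.filter_congr (fun t ht => ?_)
    simp only [and_iff_right_iff_imp]
    intro h2 h1
    exact hself t ht (h1.trans h2.symm)
  have hfilter3 : (T.filter (fun t => ¬ t.1 = v)).filter (fun t => ¬ t.2.2 = v)
      = T.filter (fun t => t.1 ≠ v ∧ t.2.2 ≠ v) := by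
    rw [Finset.filter_filter]
  have hsplit2 := Finset.sum_filter_add_sum_filter_not
      (T.filter (fun t => ¬ t.1 = v)) (fun t => t.2.2 = v) D
  rw [hfilter2, hfilter3] at hsplit2
  -- simplify D on each part
  have hD1 : ∀ t ∈ T.filter (fun t => t.1 = v), D t
      = hadamard (g t.2.1) (φ t.2.2)
        - ∑ u : E, dmProb φ g v t u • hadamard (g t.2.1) (φ u) := by
    intro t ht
    have h1 : t.1 = v := (Finset.mem_filter.mp ht).2
    simp only [hD, hc, if_pos h1]
  have hD2 : ∀ t ∈ T.filter (fun t => t.2.2 = v), D t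
      = (1 - dmProb φ g v t v) • hadamard (g t.2.1) (φ t.1) := by
    intro t ht
    obtain ⟨htT, h2⟩ := Finset.mem_filter.mp ht
    have h1 : ¬ t.1 = v := fun h => hself t htT (h.trans h2.symm)
    simp only [hD, hc, if_neg h1, h2, if_pos rfl, smul_ite, smul_zero]
    rw [Finset.sum_ite_eq' Finset.univ v (fun u => dmProb φ g v t u • hadamard (g t.2.1) (φ t.1))]
    simp only [Finset.mem_univ, if_pos]
    rw [sub_smul, one_smul]
  have hD3 : ∀ t ∈ T.filter (fun t => t.1 ≠ v ∧ t.2.2 ≠ v), D t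
      = - (dmProb φ g v t v • hadamard (g t.2.1) (φ t.1)) := by
    intro t ht
    obtain ⟨htT, h1, h2⟩ := Finset.mem_filter.mp ht
    simp only [hD, hc, if_neg h1, if_neg h2, smul_ite, smul_zero]
    rw [Finset.sum_ite_eq' Finset.univ v (fun u => dmProb φ g v t u • hadamard (g t.2.1) (φ t.1))]
    simp only [Finset.mem_univ, if_pos]
    rw [zero_sub]
  rw [smul_add β, hβX, hβX]
  rw [← hsplit1, ← hsplit2]
  rw [Finset.sum_congr rfl hD1, Finset.sum_congr rfl hD2, Finset.sum_congr rfl hD3]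
  rw [Finset.sum_sub_distrib, Finset.sum_neg_distrib]
  module
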